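/- Assume ψ ∈ C([0, T]; H^γ) for some γ ≥ 0, and let G : H → R^{2JK} be the Lagrangian observation operator mapping an initial velocity field u for the Stokes equation dv/dt + νAv = ψ, v(0) = u, to the positions (z_j(t_k))_{j=1..J, k=1..K} of J Lagrangian tracers z_j(t) = z_{j,0} + ∫₀ᵗ v(z_j(s), s) ds at fixed observation times 0 < t₁ < … < t_K ≤ T. Then for any ℓ ≥ 0 there is C > 0 such that for all u ∈ H^ℓ, |G(u)| ≤ C(1 + ‖u‖_ℓ). -/

import Mathlib

/-!
STATEMENT 11 (Lemma 4.4, first part, of the paper, `l:5a`: bound on the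
Lagrangian observation operator).

Setting: the Stokes equations on the periodic unit square, `dv/dt + νAv = ψ`,
`v(0) = u`, encoded spectrally through the eigenbasis `φ_k`, `k ∈ ℤ²∖{0}`, of
the Stokes operator (eigenvalues `λ_k = 4π²|k|²`), with the mild solution map
`V : H → (time → H)` given coefficientwise, point evaluation `ev` on the torus
satisfying the Sobolev embedding bound, and the analytic-semigroup smoothing
estimate (as licensed by the problem context).  `J` tracers `z_j` solve the
integral equations `z_j(t) = z_{j,0} + ∫₀ᵗ v(z_j(s),s) ds` and are observed at
times `0 < t₁ < … < t_K ≤ T`; the observation operator is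
`G(u) = (z_j(t_k))_{j,k} ∈ ℝ^{2JK}`.

Conclusion: if `ψ ∈ C([0,T];H^γ)` with `γ ≥ 0`, then for every `ℓ ≥ 0` there
is `C > 0` with `|G(u)| ≤ C(1 + ‖u‖_ℓ)` for all `u ∈ H^ℓ`.
-/

open MeasureTheory Real Filter

/-- the wavevectors `k ∈ ℤ²∖{0}` indexing the Stokes eigenbasis on the torus -/
abbrev Kidx : Type := {k : ℤ × ℤ // k ≠ 0}

/-- Euclidean norm of a finite real vector -/
noncomputable def eucNorm {ι : Type*} [Fintype ι] (v : ι → ℝ) : ℝ :=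
  Real.sqrt (∑ i, v i ^ 2)

/-- squared spectrally-defined Sobolev norm `‖u‖_s²` -/
noncomputable def sobSq {H : Type*} [NormedAddCommGroup H] [InnerProductSpace ℝ H]
    [CompleteSpace H] (φ : HilbertBasis Kidx ℝ H) (lam : Kidx → ℝ) (s : ℝ) (u : H) : ℝ :=
  ∑' k, lam k ^ s * (φ.repr u k : ℝ) ^ 2

/-- spectrally-defined Sobolev norm `‖u‖_s` (`H^s = D(A^{s/2})`) -/
noncomputable def sobNorm {H : Type*} [NormedAddCommGroup H] [InnerProductSpace ℝ H]
    [CompleteSpace H] (φ : HilbertBasis Kidx ℝ H) (lam : Kidx → ℝ) (s : ℝ) (u : H) : ℝ :=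
  Real.sqrt (sobSq φ lam s u)

/-- membership in the Sobolev space `H^s` -/
def MemHs {H : Type*} [NormedAddCommGroup H] [InnerProductSpace ℝ H]
    [CompleteSpace H] (φ : HilbertBasis Kidx ℝ H) (lam : Kidx → ℝ) (s : ℝ) (u : H) : Prop :=
  Summable fun k => lam k ^ s * (φ.repr u k : ℝ) ^ 2

/-- `v` is the mild solution of the Stokes equation `dv/dt + νAv = ψ`, `v(0) = u`,
on `[0,T]`, expressed coefficientwise by the variation-of-constants formula. -/
def IsStokesSolution {H : Type*} [NormedAddCommGroup H] [InnerProductSpace ℝ H]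
    [CompleteSpace H] (φ : HilbertBasis Kidx ℝ H) (lam : Kidx → ℝ)
    (ν T : ℝ) (ψ : ℝ → H) (u : H) (v : ℝ → H) : Prop :=
  v 0 = u ∧ ∀ k : Kidx, ∀ t ∈ Set.Icc (0 : ℝ) T,
    (φ.repr (v t) k : ℝ) = Real.exp (-(ν * lam k * t)) * (φ.repr u k : ℝ) +
      ∫ s in (0 : ℝ)..t, Real.exp (-(ν * lam k * (t - s))) * (φ.repr (ψ s) k : ℝ)


set_option maxHeartbeats 1000000
set_option linter.unusedSectionVars false
open scoped ENNReal NNReal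

lemma sq_le_four_exp (x : ℝ) (hx : 0 ≤ x) : x^2 ≤ 4 * Real.exp x := by
  have h1 := Real.add_one_le_exp (x/2)
  have h2 : Real.exp (x/2) * Real.exp (x/2) = Real.exp x := by
    rw [← Real.exp_add]; ring_nf
  nlinarith [Real.exp_pos (x/2)]

lemma rpow_three_half_le (y : ℝ) (hy : 0 ≤ y) : y ^ (3/2 : ℝ) ≤ y + y^2 := by
  rcases eq_or_lt_of_le hy with h|h
  · rw [← h, Real.zero_rpow (by norm_num)]; norm_num
  rcases le_total y 1 with h1|h1
  · have h2 : y ^ (3/2:ℝ) ≤ y ^ (1:ℝ) :=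
      Real.rpow_le_rpow_of_exponent_ge h h1 (by norm_num)
    rw [Real.rpow_one] at h2
    nlinarith [sq_nonneg y]
  · have h2 : y ^ (3/2:ℝ) ≤ y ^ (2:ℝ) :=
      Real.rpow_le_rpow_of_exponent_le h1 (by norm_num)
    have h3 : y ^ (2:ℝ) = y^2 := by
      rw [show (2:ℝ) = ((2:ℕ):ℝ) by norm_num, Real.rpow_natCast]
    rw [h3] at h2
    nlinarith

/-- Key scalar bound: `y^{3/2} e^{-cy} ≤ 1/c + 4/c²`. -/
lemma key_scalar {c y : ℝ} (hc : 0 < c) (hy : 0 ≤ y) :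
    y ^ (3/2:ℝ) * Real.exp (-(c * y)) ≤ 1/c + 4/c^2 := by
  have h1 := rpow_three_half_le y hy
  have hcy : 0 ≤ c * y := by positivity
  have e1 : c * y ≤ Real.exp (c*y) := by
    have := Real.add_one_le_exp (c*y); linarith
  have e2 : (c*y)^2 ≤ 4 * Real.exp (c*y) := sq_le_four_exp _ hcy
  have hep := Real.exp_pos (c*y)
  have key : y + y^2 ≤ (1/c + 4/c^2) * Real.exp (c*y) := by
    have hy1 : y ≤ Real.exp (c*y) / c := by
      rw [le_div_iff₀ hc]; nlinarith
    have hy2 : y^2 ≤ 4 * Real.exp (c*y) / c^2 := by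
      rw [le_div_iff₀ (by positivity : (0:ℝ) < c^2)]; nlinarith
    have : (1/c + 4/c^2) * Real.exp (c*y) = Real.exp (c*y)/c + 4*Real.exp (c*y)/c^2 := by
      field_simp
    rw [this]; linarith
  rw [Real.exp_neg]
  rw [mul_inv_le_iff₀ hep]
  calc y ^ (3/2:ℝ) ≤ y + y^2 := h1
    _ ≤ (1/c + 4/c^2) * Real.exp (c*y) := key

/-- `λ^{3/2} e^{-cλτ} ≤ C(c) τ^{-3/2}` -/
lemma lam_tau_bound {c lam τ : ℝ} (hc : 0 < c) (hlam : 0 ≤ lam) (hτ : 0 < τ) :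
    lam ^ (3/2:ℝ) * Real.exp (-(c*lam*τ)) ≤ (1/c + 4/c^2) * τ ^ (-(3/2):ℝ) := by
  have h := key_scalar (c := c) (y := lam * τ) hc (by positivity)
  rw [Real.mul_rpow hlam hτ.le] at h
  have hτ32 : (0:ℝ) < τ ^ (3/2:ℝ) := Real.rpow_pos_of_pos hτ _
  have hinv : τ ^ (-(3/2):ℝ) = (τ ^ (3/2:ℝ))⁻¹ := by
    rw [Real.rpow_neg hτ.le]
  have harg : -(c * (lam * τ)) = -(c*lam*τ) := by ring
  rw [harg] at h
  rw [hinv, ← div_eq_mul_inv, le_div_iff₀ hτ32]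
  calc lam ^ (3/2:ℝ) * Real.exp (-(c*lam*τ)) * τ ^ (3/2:ℝ)
      = lam ^ (3/2:ℝ) * τ ^ (3/2:ℝ) * Real.exp (-(c*lam*τ)) := by ring
    _ ≤ 1/c + 4/c^2 := h


section
variable {H : Type*} [NormedAddCommGroup H] [InnerProductSpace ℝ H] [CompleteSpace H]

lemma coord_lipschitz (k : Kidx) :
    LipschitzWith 1 (fun F : lp (fun _ : Kidx => ℝ) 2 => F k) := by
  apply LipschitzWith.of_dist_le_mul
  intro F G
  have h := lp.norm_apply_le_norm (E := fun _ : Kidx => ℝ) (p := 2) (by norm_num) (F - G) k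
  have hco : (F - G) k = F k - G k := by
    rw [lp.coeFn_sub]; rfl
  rw [hco] at h
  simpa [dist_eq_norm, one_mul] using h

lemma coord_continuousOn (φ : HilbertBasis Kidx ℝ H) (k : Kidx) (ψ : ℝ → H) {s : Set ℝ}
    (h : ContinuousOn ψ s) :
    ContinuousOn (fun σ => (φ.repr (ψ σ) k : ℝ)) s :=
  ((coord_lipschitz k).continuous.comp φ.repr.continuous).comp_continuousOn h

lemma coeff_abs_le (φ : HilbertBasis Kidx ℝ H) (w : H) (k : Kidx) :
    |(φ.repr w k : ℝ)| ≤ ‖w‖ := by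
  have h := lp.norm_apply_le_norm (E := fun _ : Kidx => ℝ) (p := 2) (by norm_num) (φ.repr w) k
  simpa [φ.repr.norm_map w] using h

lemma sum_coeff_sq_le (φ : HilbertBasis Kidx ℝ H) (w : H) (F : Finset Kidx) :
    ∑ k ∈ F, (φ.repr w k : ℝ)^2 ≤ ‖w‖^2 := by
  have h := lp.sum_rpow_le_norm_rpow (E := fun _ : Kidx => ℝ) (p := 2)
    (by norm_num) (φ.repr w) F
  have h2 : ((2:ℝ≥0∞)).toReal = (2:ℝ) := by norm_num
  rw [h2] at h
  have e1 : ∀ x : ℝ, ‖x‖ ^ (2:ℝ) = x^2 := fun x => by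
    rw [show (2:ℝ) = ((2:ℕ):ℝ) by norm_num, Real.rpow_natCast]
    simp [sq_abs]
  calc ∑ k ∈ F, (φ.repr w k : ℝ)^2 = ∑ k ∈ F, ‖(φ.repr w k : ℝ)‖ ^ (2:ℝ) := by
        refine Finset.sum_congr rfl fun k _ => (e1 _).symm
    _ ≤ ‖φ.repr w‖ ^ (2:ℝ) := h
    _ = ‖w‖^2 := by
        rw [φ.repr.norm_map w, show (2:ℝ) = ((2:ℕ):ℝ) by norm_num, Real.rpow_natCast]

lemma summable_coeff_sq (φ : HilbertBasis Kidx ℝ H) (w : H) :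
    Summable (fun k => (φ.repr w k : ℝ)^2) := by
  apply summable_of_sum_le (c := ‖w‖^2)
  · intro k; positivity
  · intro F; exact sum_coeff_sq_le φ w F

end


/-- monotonicity of the Sobolev scale when all eigenvalues are `≥ 1` -/
lemma memHs_mono {H : Type*} [NormedAddCommGroup H] [InnerProductSpace ℝ H]
    [CompleteSpace H] (φ : HilbertBasis Kidx ℝ H) (lam : Kidx → ℝ)
    (hlam1 : ∀ k, 1 ≤ lam k) {s s' : ℝ} (hss : s' ≤ s) (u : H) (hu : MemHs φ lam s u) :
    MemHs φ lam s' u ∧ sobNorm φ lam s' u ≤ sobNorm φ lam s u := by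
  have hle : ∀ k, lam k ^ s' * (φ.repr u k : ℝ)^2 ≤ lam k ^ s * (φ.repr u k : ℝ)^2 := fun k =>
    mul_le_mul_of_nonneg_right (Real.rpow_le_rpow_of_exponent_le (hlam1 k) hss) (sq_nonneg _)
  have hnn : ∀ k, 0 ≤ lam k ^ s' * (φ.repr u k : ℝ)^2 := fun k =>
    mul_nonneg (Real.rpow_nonneg (le_trans zero_le_one (hlam1 k)) _) (sq_nonneg _)
  have hsum' : MemHs φ lam s' u := Summable.of_nonneg_of_le hnn hle hu
  exact ⟨hsum', Real.sqrt_le_sqrt (Summable.tsum_le_tsum hle hsum' hu)⟩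

lemma lam_ge_one {lam : Kidx → ℝ}
    (hlam : ∀ k : Kidx, lam k = 4 * π ^ 2 * (((k.1.1 : ℝ)) ^ 2 + ((k.1.2 : ℝ)) ^ 2)) :
    ∀ k, 1 ≤ lam k := by
  intro k
  rw [hlam k]
  have h1 : (1:ℤ) ≤ k.1.1^2 + k.1.2^2 := by
    rcases eq_or_ne k.1.1 0 with h|h
    · have h2 : k.1.2 ≠ 0 := by
        intro h2
        exact k.2 (Prod.ext h h2)
      nlinarith [Int.one_le_abs h2, sq_abs k.1.2, sq_nonneg k.1.1, abs_nonneg k.1.2]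
    · nlinarith [Int.one_le_abs h, sq_abs k.1.1, sq_nonneg k.1.2, abs_nonneg k.1.1]
  have h1' : (1:ℝ) ≤ (k.1.1:ℝ)^2 + (k.1.2:ℝ)^2 := by exact_mod_cast h1
  nlinarith [Real.pi_gt_three]


lemma memHs_three_half
    {H : Type*} [NormedAddCommGroup H] [InnerProductSpace ℝ H] [CompleteSpace H]
    (φ : HilbertBasis Kidx ℝ H) (lam : Kidx → ℝ) (hlam0 : ∀ k, 0 ≤ lam k)
    (ν T : ℝ) (hν : 0 < ν) (hT : 0 < T) (ψ : ℝ → H)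
    (hψcont : ContinuousOn ψ (Set.Icc 0 T))
    (u w : H) (t : ℝ) (ht : 0 < t) (htT : t ≤ T)
    (hcoef : ∀ k : Kidx, (φ.repr w k : ℝ) =
      Real.exp (-(ν * lam k * t)) * (φ.repr u k : ℝ) +
      ∫ s in (0:ℝ)..t, Real.exp (-(ν * lam k * (t - s))) * (φ.repr (ψ s) k : ℝ)) :
    MemHs φ lam (3/2) w := by
  obtain ⟨M, hM⟩ :=
    (isCompact_Icc : IsCompact (Set.Icc (0:ℝ) T)).exists_bound_of_continuousOn hψcont
  have hM0 : 0 ≤ M := le_trans (norm_nonneg _) (hM 0 ⟨le_refl _, hT.le⟩)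
  have hIccsub' : Set.Icc (0:ℝ) t ⊆ Set.Icc (0:ℝ) T := fun σ hσ => ⟨hσ.1, hσ.2.trans htT⟩
  have IntOn_rpow : ∀ r : ℝ, -1 < r →
      IntegrableOn (fun σ => (t-σ) ^ r) (Set.Ioo (0:ℝ) t) := by
    intro r hr
    have h1 : IntervalIntegrable (fun x : ℝ => x ^ r) volume 0 t :=
      intervalIntegral.intervalIntegrable_rpow' hr
    have h3 : IntervalIntegrable (fun x : ℝ => (t - x) ^ r) volume 0 t := by
      simpa using (h1.comp_sub_left t).symm
    rwa [intervalIntegrable_iff_integrableOn_Ioo_of_le ht.le] at h3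
  set C2 : ℝ := 1/(2*ν) + 4/(2*ν)^2 with hC2def
  have hC2 : 0 ≤ C2 := by positivity
  set Ka : ℝ := ∫ σ in Set.Ioo (0:ℝ) t, (t-σ) ^ (-(3/4):ℝ) with hKadef
  have hKa0 : 0 ≤ Ka := by
    apply setIntegral_nonneg measurableSet_Ioo
    intro σ hσ
    exact Real.rpow_nonneg (by linarith [hσ.2] : (0:ℝ) ≤ t - σ) _
  set D1 : ℝ := C2 * t ^ (-(3/2):ℝ) with hD1def
  have hD1 : 0 ≤ D1 := mul_nonneg hC2 (Real.rpow_nonneg ht.le _)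
  have hψk : ∀ k : Kidx, ContinuousOn (fun σ => (φ.repr (ψ σ) k : ℝ)) (Set.Icc (0:ℝ) T) :=
    fun k => coord_continuousOn φ k ψ hψcont
  -- the weight functions
  set gfun : Kidx → ℝ → ℝ := fun k σ =>
    (t-σ) ^ ((3:ℝ)/8) * (Real.exp (-(ν * lam k * (t-σ))) * |(φ.repr (ψ σ) k : ℝ)|)
    with hgdef
  have hgcont : ∀ k, ContinuousOn (gfun k) (Set.Icc (0:ℝ) t) := by
    intro k
    apply ContinuousOn.mul
    · apply Continuous.continuousOn
      apply continuous_iff_continuousAt.2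
      intro x
      exact (Real.continuousAt_rpow_const _ _ (Or.inr (by norm_num))).comp
        (continuous_const.sub continuous_id).continuousAt
    · exact ((Real.continuous_exp.comp (by continuity)).continuousOn).mul
        (((hψk k).mono hIccsub').abs)
  have hg2int : ∀ k, IntegrableOn (fun σ => (gfun k σ)^2) (Set.Ioo (0:ℝ) t) := by
    intro k
    exact (((hgcont k).pow 2).integrableOn_Icc).mono_set Set.Ioo_subset_Icc_self
  have hGk0 : ∀ k, 0 ≤ ∫ σ in Set.Ioo (0:ℝ) t, (gfun k σ)^2 := fun k =>
    setIntegral_nonneg measurableSet_Ioo (fun σ _ => sq_nonneg _)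
  -- Cauchy–Schwarz step
  have CS : ∀ k : Kidx,
      (∫ s in (0:ℝ)..t, Real.exp (-(ν * lam k * (t - s))) * (φ.repr (ψ s) k : ℝ))^2 ≤
      Ka * ∫ σ in Set.Ioo (0:ℝ) t, (gfun k σ)^2 := by
    intro k
    set ψk : ℝ → ℝ := fun σ => (φ.repr (ψ σ) k : ℝ) with hψkdef
    set f : ℝ → ℝ := fun σ => (t-σ) ^ (-((3:ℝ)/8)) with hfdef
    have hIoo : (∫ s in (0:ℝ)..t, Real.exp (-(ν * lam k * (t - s))) * ψk s) =
        ∫ σ in Set.Ioo (0:ℝ) t, Real.exp (-(ν * lam k * (t - σ))) * ψk σ := by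
      rw [intervalIntegral.integral_of_le ht.le, integral_Ioc_eq_integral_Ioo]
    rw [hIoo]
    have heq : (∫ σ in Set.Ioo (0:ℝ) t, ‖Real.exp (-(ν * lam k * (t - σ))) * ψk σ‖) =
        ∫ σ in Set.Ioo (0:ℝ) t, f σ * gfun k σ := by
      apply setIntegral_congr_fun measurableSet_Ioo
      intro σ hσ
      show ‖Real.exp (-(ν * lam k * (t - σ))) * ψk σ‖ = f σ * gfun k σ
      have htσ : (0:ℝ) < t - σ := by linarith [hσ.2]
      simp only [hgdef, hfdef, Real.norm_eq_abs, abs_mul, abs_of_pos (Real.exp_pos _)]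
      rw [show ((t-σ) ^ (-((3:ℝ)/8)) * ((t-σ) ^ ((3:ℝ)/8) *
        (Real.exp (-(ν * lam k * (t - σ))) * |ψk σ|)) =
        ((t-σ) ^ (-((3:ℝ)/8)) * (t-σ) ^ ((3:ℝ)/8)) *
        (Real.exp (-(ν * lam k * (t - σ))) * |ψk σ|)) from by ring,
        ← Real.rpow_add htσ]
      norm_num
    have habs : |∫ σ in Set.Ioo (0:ℝ) t, Real.exp (-(ν * lam k * (t - σ))) * ψk σ| ≤
        ∫ σ in Set.Ioo (0:ℝ) t, f σ * gfun k σ := by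
      rw [← heq, ← Real.norm_eq_abs]
      exact norm_integral_le_integral_norm _
    -- Hölder with p = q = 2
    have hpq : Real.HolderConjugate 2 2 := Real.HolderConjugate.two_two
    have hfnn : 0 ≤ᵐ[volume.restrict (Set.Ioo (0:ℝ) t)] f := by
      filter_upwards [ae_restrict_mem measurableSet_Ioo] with σ hσ
      exact Real.rpow_nonneg (by linarith [hσ.2] : (0:ℝ) ≤ t - σ) _
    have hgnn : 0 ≤ᵐ[volume.restrict (Set.Ioo (0:ℝ) t)] gfun k := by
      filter_upwards [ae_restrict_mem measurableSet_Ioo] with σ hσ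
      exact mul_nonneg (Real.rpow_nonneg (by linarith [hσ.2] : (0:ℝ) ≤ t - σ) _)
        (mul_nonneg (Real.exp_pos _).le (abs_nonneg _))
    have hfmeas : AEStronglyMeasurable f (volume.restrict (Set.Ioo (0:ℝ) t)) := by
      apply ContinuousOn.aestronglyMeasurable _ measurableSet_Ioo
      intro x hx
      apply ContinuousWithinAt.mono _ (Set.subset_univ _)
      apply ContinuousAt.continuousWithinAt
      refine (Real.continuousAt_rpow_const _ _ (Or.inl ?_)).comp
        (continuous_const.sub continuous_id).continuousAt
      intro h
      rw [sub_eq_zero] at h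
      have := hx.2
      linarith
    have hgmeas : AEStronglyMeasurable (gfun k) (volume.restrict (Set.Ioo (0:ℝ) t)) :=
      ((hgcont k).mono Set.Ioo_subset_Icc_self).aestronglyMeasurable measurableSet_Ioo
    have hf2int : IntegrableOn (fun σ => f σ ^ (2:ℝ)) (Set.Ioo (0:ℝ) t) := by
      apply (IntOn_rpow (-(3/4)) (by norm_num)).congr_fun _ measurableSet_Ioo
      intro σ hσ
      have h0 : (0:ℝ) ≤ t - σ := by linarith [hσ.2]
      rw [hfdef]
      show (t-σ) ^ (-(3/4):ℝ) = ((t-σ) ^ (-((3:ℝ)/8))) ^ (2:ℝ)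
      rw [← Real.rpow_mul h0]
      norm_num
    have hg2int' : IntegrableOn (fun σ => gfun k σ ^ (2:ℝ)) (Set.Ioo (0:ℝ) t) := by
      apply (hg2int k).congr_fun _ measurableSet_Ioo
      intro σ hσ
      show gfun k σ ^ 2 = gfun k σ ^ (2:ℝ)
      rw [show (2:ℝ) = ((2:ℕ):ℝ) by norm_num, Real.rpow_natCast]
    have hfmem : MemLp f (ENNReal.ofReal (2:ℝ)) (volume.restrict (Set.Ioo (0:ℝ) t)) := by
      rw [show ENNReal.ofReal (2:ℝ) = 2 by norm_num]
      apply (memLp_two_iff_integrable_sq hfmeas).2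
      apply hf2int.congr_fun _ measurableSet_Ioo
      intro σ hσ
      show f σ ^ (2:ℝ) = f σ ^ 2
      rw [show (2:ℝ) = ((2:ℕ):ℝ) by norm_num, Real.rpow_natCast]
    have hgmem : MemLp (gfun k) (ENNReal.ofReal (2:ℝ)) (volume.restrict (Set.Ioo (0:ℝ) t)) := by
      rw [show ENNReal.ofReal (2:ℝ) = 2 by norm_num]
      exact (memLp_two_iff_integrable_sq hgmeas).2 (hg2int k)
    have hold := MeasureTheory.integral_mul_le_Lp_mul_Lq_of_nonneg hpq hfnn hgnn hfmem hgmem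
    -- identify the two factors
    have hEf : (∫ σ in Set.Ioo (0:ℝ) t, f σ ^ (2:ℝ)) = Ka := by
      rw [hKadef]
      apply setIntegral_congr_fun measurableSet_Ioo
      intro σ hσ
      have h0 : (0:ℝ) ≤ t - σ := by linarith [hσ.2]
      show (f σ) ^ (2:ℝ) = (t-σ) ^ (-(3/4):ℝ)
      rw [hfdef]
      show ((t-σ) ^ (-((3:ℝ)/8))) ^ (2:ℝ) = (t-σ) ^ (-(3/4):ℝ)
      rw [← Real.rpow_mul h0]
      norm_num
    have hEg : (∫ σ in Set.Ioo (0:ℝ) t, gfun k σ ^ (2:ℝ)) =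
        ∫ σ in Set.Ioo (0:ℝ) t, gfun k σ ^ 2 := by
      apply setIntegral_congr_fun measurableSet_Ioo
      intro σ hσ
      show gfun k σ ^ (2:ℝ) = gfun k σ ^ 2
      rw [show (2:ℝ) = ((2:ℕ):ℝ) by norm_num, Real.rpow_natCast]
    rw [hEf, hEg] at hold
    have hsqrt : (∫ σ in Set.Ioo (0:ℝ) t, f σ * gfun k σ) ≤
        Real.sqrt Ka * Real.sqrt (∫ σ in Set.Ioo (0:ℝ) t, gfun k σ ^ 2) := by
      rw [Real.sqrt_eq_rpow, Real.sqrt_eq_rpow]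
      exact hold
    have hle : |∫ σ in Set.Ioo (0:ℝ) t, Real.exp (-(ν * lam k * (t - σ))) * ψk σ| ≤
        Real.sqrt Ka * Real.sqrt (∫ σ in Set.Ioo (0:ℝ) t, gfun k σ ^ 2) :=
      le_trans habs hsqrt
    have h2 : (∫ σ in Set.Ioo (0:ℝ) t, Real.exp (-(ν * lam k * (t - σ))) * ψk σ)^2 ≤
        (Real.sqrt Ka * Real.sqrt (∫ σ in Set.Ioo (0:ℝ) t, gfun k σ ^ 2))^2 := by
      rw [← sq_abs]
      exact pow_le_pow_left₀ (abs_nonneg _) hle 2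
    rwa [mul_pow, Real.sq_sqrt hKa0, Real.sq_sqrt (hGk0 k)] at h2
  -- summing the Gk over a finite set
  have SumG : ∀ F : Finset Kidx,
      ∑ k ∈ F, lam k ^ (3/2:ℝ) * (∫ σ in Set.Ioo (0:ℝ) t, (gfun k σ)^2) ≤ C2 * M^2 * Ka := by
    intro F
    have h1 : ∀ k ∈ F, Integrable (fun σ => lam k ^ (3/2:ℝ) * (gfun k σ)^2)
        (volume.restrict (Set.Ioo (0:ℝ) t)) := fun k _ => (hg2int k).const_mul _
    have step1 : ∑ k ∈ F, lam k ^ (3/2:ℝ) * (∫ σ in Set.Ioo (0:ℝ) t, (gfun k σ)^2) =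
        ∫ σ in Set.Ioo (0:ℝ) t, ∑ k ∈ F, lam k ^ (3/2:ℝ) * (gfun k σ)^2 := by
      rw [integral_finset_sum F h1]
      exact Finset.sum_congr rfl fun k _ => (integral_const_mul _ _).symm
    rw [step1]
    have step2 : (∫ σ in Set.Ioo (0:ℝ) t, ∑ k ∈ F, lam k ^ (3/2:ℝ) * (gfun k σ)^2) ≤
        ∫ σ in Set.Ioo (0:ℝ) t, C2 * M^2 * (t-σ) ^ (-(3/4):ℝ) := by
      apply setIntegral_mono_on (integrable_finset_sum F h1)
        ((IntOn_rpow (-(3/4)) (by norm_num)).const_mul _) measurableSet_Ioo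
      intro σ hσ
      have htσ : (0:ℝ) < t - σ := by linarith [hσ.2]
      have hptwise : ∀ k ∈ F, lam k ^ (3/2:ℝ) * (gfun k σ)^2 ≤
          C2 * (t-σ) ^ (-(3/4):ℝ) * (φ.repr (ψ σ) k : ℝ)^2 := by
        intro k _
        have hg2 : (gfun k σ)^2 =
            (t-σ) ^ ((3:ℝ)/4) * Real.exp (-(2*ν * lam k * (t-σ))) * (φ.repr (ψ σ) k : ℝ)^2 := by
          rw [hgdef]
          show ((t-σ) ^ ((3:ℝ)/8) * (Real.exp (-(ν * lam k * (t-σ))) *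
            |(φ.repr (ψ σ) k : ℝ)|))^2 = _
          rw [mul_pow, mul_pow, sq_abs]
          have e1 : ((t-σ:ℝ) ^ ((3:ℝ)/8))^2 = (t-σ) ^ ((3:ℝ)/4) := by
            rw [← Real.rpow_natCast ((t-σ) ^ ((3:ℝ)/8)) 2, ← Real.rpow_mul htσ.le]
            norm_num
          have e2 : Real.exp (-(ν * lam k * (t-σ)))^2 = Real.exp (-(2*ν * lam k * (t-σ))) := by
            rw [sq, ← Real.exp_add]
            ring_nf
          rw [e1, e2]
          ring
        rw [hg2]
        have hkey := lam_tau_bound (c := 2*ν) (lam := lam k) (τ := t - σ)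
          (by linarith) (hlam0 k) htσ
        have hrw : lam k ^ (3/2:ℝ) * ((t-σ) ^ ((3:ℝ)/4) * Real.exp (-(2*ν * lam k * (t-σ))) *
            (φ.repr (ψ σ) k : ℝ)^2) =
            (lam k ^ (3/2:ℝ) * Real.exp (-(2*ν * lam k * (t-σ)))) *
            ((t-σ) ^ ((3:ℝ)/4) * (φ.repr (ψ σ) k : ℝ)^2) := by ring
        rw [hrw]
        have hfac : (lam k ^ (3/2:ℝ) * Real.exp (-(2*ν * lam k * (t-σ)))) *
            ((t-σ) ^ ((3:ℝ)/4) * (φ.repr (ψ σ) k : ℝ)^2) ≤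
            (C2 * (t-σ) ^ (-(3/2):ℝ)) * ((t-σ) ^ ((3:ℝ)/4) * (φ.repr (ψ σ) k : ℝ)^2) := by
          apply mul_le_mul_of_nonneg_right hkey
          exact mul_nonneg (Real.rpow_nonneg htσ.le _) (sq_nonneg _)
        refine hfac.trans (le_of_eq ?_)
        rw [show C2 * (t-σ) ^ (-(3/2):ℝ) * ((t-σ) ^ ((3:ℝ)/4) * (φ.repr (ψ σ) k : ℝ)^2) =
          C2 * ((t-σ) ^ (-(3/2):ℝ) * (t-σ) ^ ((3:ℝ)/4)) * (φ.repr (ψ σ) k : ℝ)^2 from by ring,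
          ← Real.rpow_add htσ]
        norm_num
      calc ∑ k ∈ F, lam k ^ (3/2:ℝ) * (gfun k σ)^2
          ≤ ∑ k ∈ F, C2 * (t-σ) ^ (-(3/4):ℝ) * (φ.repr (ψ σ) k : ℝ)^2 :=
            Finset.sum_le_sum hptwise
        _ = C2 * (t-σ) ^ (-(3/4):ℝ) * ∑ k ∈ F, (φ.repr (ψ σ) k : ℝ)^2 := by
            rw [Finset.mul_sum]
        _ ≤ C2 * (t-σ) ^ (-(3/4):ℝ) * M^2 := by
            apply mul_le_mul_of_nonneg_left _
              (mul_nonneg hC2 (Real.rpow_nonneg htσ.le _))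
            refine (sum_coeff_sq_le φ (ψ σ) F).trans ?_
            have hψσ : ‖ψ σ‖ ≤ M := hM σ ⟨hσ.1.le, hσ.2.le.trans htT⟩
            nlinarith [norm_nonneg (ψ σ)]
        _ = C2 * M^2 * (t-σ) ^ (-(3/4):ℝ) := by ring
    refine step2.trans (le_of_eq ?_)
    rw [integral_const_mul, hKadef]
  -- conclusion: summability
  apply summable_of_sum_le (c := 2*D1*‖u‖^2 + 2*Ka*(C2*M^2*Ka))
  · intro k
    exact mul_nonneg (Real.rpow_nonneg (hlam0 k) _) (sq_nonneg _)
  · intro F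
    have hterm : ∀ k ∈ F, lam k ^ ((3:ℝ)/2) * (φ.repr w k : ℝ)^2 ≤
        2 * D1 * (φ.repr u k : ℝ)^2 +
        2 * Ka * (lam k ^ (3/2:ℝ) * (∫ σ in Set.Ioo (0:ℝ) t, (gfun k σ)^2)) := by
      intro k _
      set a : ℝ := Real.exp (-(ν * lam k * t)) * (φ.repr u k : ℝ) with hadef
      set b : ℝ := ∫ s in (0:ℝ)..t, Real.exp (-(ν * lam k * (t - s))) * (φ.repr (ψ s) k : ℝ)
        with hbdef
      have hlamnn : (0:ℝ) ≤ lam k ^ (3/2:ℝ) := Real.rpow_nonneg (hlam0 k) _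
      have hsplit : lam k ^ ((3:ℝ)/2) * (φ.repr w k : ℝ)^2 ≤
          2 * (lam k ^ (3/2:ℝ) * a^2) + 2 * (lam k ^ (3/2:ℝ) * b^2) := by
        rw [hcoef k, ← hadef, ← hbdef]
        nlinarith [sq_nonneg (a - b), hlamnn, sq_nonneg (a+b)]
      have hA : lam k ^ (3/2:ℝ) * a^2 ≤ D1 * (φ.repr u k : ℝ)^2 := by
        rw [hadef, mul_pow]
        have e2 : Real.exp (-(ν * lam k * t))^2 = Real.exp (-(2*ν * lam k * t)) := by
          rw [sq, ← Real.exp_add]; ring_nf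
        rw [e2]
        have hkey := lam_tau_bound (c := 2*ν) (lam := lam k) (τ := t)
          (by linarith) (hlam0 k) ht
        have hrw2 : lam k ^ (3/2:ℝ) * (Real.exp (-(2*ν * lam k * t)) *
            (φ.repr u k : ℝ)^2) = (lam k ^ (3/2:ℝ) *
            Real.exp (-(2*ν * lam k * t))) * (φ.repr u k : ℝ)^2 := by ring
        rw [hrw2, hD1def]
        exact mul_le_mul_of_nonneg_right hkey (sq_nonneg _)
      have hB : lam k ^ (3/2:ℝ) * b^2 ≤
          Ka * (lam k ^ (3/2:ℝ) * (∫ σ in Set.Ioo (0:ℝ) t, (gfun k σ)^2)) := by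
        have := mul_le_mul_of_nonneg_left (CS k) hlamnn
        calc lam k ^ (3/2:ℝ) * b^2
            ≤ lam k ^ (3/2:ℝ) * (Ka * ∫ σ in Set.Ioo (0:ℝ) t, (gfun k σ)^2) := this
          _ = Ka * (lam k ^ (3/2:ℝ) * (∫ σ in Set.Ioo (0:ℝ) t, (gfun k σ)^2)) := by ring
      calc lam k ^ ((3:ℝ)/2) * (φ.repr w k : ℝ)^2
          ≤ 2 * (lam k ^ (3/2:ℝ) * a^2) + 2 * (lam k ^ (3/2:ℝ) * b^2) := hsplit
        _ ≤ 2 * (D1 * (φ.repr u k : ℝ)^2) +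
            2 * (Ka * (lam k ^ (3/2:ℝ) * (∫ σ in Set.Ioo (0:ℝ) t, (gfun k σ)^2))) := by
            have := hA; have := hB; linarith
        _ = 2 * D1 * (φ.repr u k : ℝ)^2 +
            2 * Ka * (lam k ^ (3/2:ℝ) * (∫ σ in Set.Ioo (0:ℝ) t, (gfun k σ)^2)) := by ring
    calc ∑ k ∈ F, lam k ^ ((3:ℝ)/2) * (φ.repr w k : ℝ)^2
        ≤ ∑ k ∈ F, (2 * D1 * (φ.repr u k : ℝ)^2 +
            2 * Ka * (lam k ^ (3/2:ℝ) * (∫ σ in Set.Ioo (0:ℝ) t, (gfun k σ)^2))) :=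
          Finset.sum_le_sum hterm
      _ = 2 * D1 * (∑ k ∈ F, (φ.repr u k : ℝ)^2) +
          2 * Ka * (∑ k ∈ F, lam k ^ (3/2:ℝ) * (∫ σ in Set.Ioo (0:ℝ) t, (gfun k σ)^2)) := by
          rw [Finset.sum_add_distrib, Finset.mul_sum, Finset.mul_sum]
      _ ≤ 2 * D1 * ‖u‖^2 + 2 * Ka * (C2*M^2*Ka) := by
          have h1 := sum_coeff_sq_le φ u F
          have h2 := SumG F
          have : (0:ℝ) ≤ 2 * D1 := by linarith
          have : (0:ℝ) ≤ 2 * Ka := by linarith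
          nlinarith
      _ = 2*D1*‖u‖^2 + 2*Ka*(C2*M^2*Ka) := by ring

theorem stmt11
    {H : Type*} [NormedAddCommGroup H] [InnerProductSpace ℝ H] [CompleteSpace H]
    (φ : HilbertBasis Kidx ℝ H) (lam : Kidx → ℝ)
    (hlam : ∀ k : Kidx, lam k = 4 * π ^ 2 * (((k.1.1 : ℝ)) ^ 2 + ((k.1.2 : ℝ)) ^ 2))
    -- pointwise evaluation on the torus, with the Sobolev embedding bound
    (ev : ℝ × ℝ → H →ₗ[ℝ] ℝ × ℝ)
    (hevSup : ∀ s : ℝ, 1 < s → ∃ C : ℝ, 0 < C ∧ ∀ w : H, MemHs φ lam s w →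
      ∀ x : ℝ × ℝ, ‖ev x w‖ ≤ C * sobNorm φ lam s w)
    (ν T : ℝ) (hν : 0 < ν) (hT : 0 < T)
    -- forcing ψ ∈ C([0,T];H^γ), γ ≥ 0, with ‖ψ‖_{C([0,T];H^γ)} ≤ Cψ
    (γ : ℝ) (hγ : 0 ≤ γ) (ψ : ℝ → H)
    (hψcont : ContinuousOn ψ (Set.Icc (0 : ℝ) T))
    (hψγ : ∀ t ∈ Set.Icc (0 : ℝ) T, MemHs φ lam γ (ψ t))
    (Cψ : ℝ) (hCψ : ∀ t ∈ Set.Icc (0 : ℝ) T, sobNorm φ lam γ (ψ t) ≤ Cψ)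
    -- solution map of the Stokes equation
    (V : H → ℝ → H) (hV : ∀ u : H, IsStokesSolution φ lam ν T ψ u (V u))
    -- the analytic-semigroup smoothing estimate (4.9)
    (hsmooth : ∀ ℓ s : ℝ, 0 ≤ ℓ → ℓ ≤ s → s < 2 + γ → ∃ C : ℝ, 0 < C ∧
      ∀ u : H, MemHs φ lam ℓ u → ∀ t ∈ Set.Ioc (0 : ℝ) T,
        sobNorm φ lam s (V u t) ≤ C * (t ^ (-(s - ℓ) / 2) * sobNorm φ lam ℓ u + Cψ))
    -- the J tracers, starting from z_{j,0}, driven by the velocity field V u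
    {J K : ℕ} (z0 : Fin J → ℝ × ℝ) (Ztr : H → Fin J → ℝ → ℝ × ℝ)
    (hZ : ∀ (u : H) (j : Fin J), ContinuousOn (Ztr u j) (Set.Icc (0 : ℝ) T) ∧
      ∀ t ∈ Set.Icc (0 : ℝ) T,
        Ztr u j t = z0 j + ∫ s in (0 : ℝ)..t, ev (Ztr u j s) (V u s))
    -- observation times 0 < t₁ < … < t_K ≤ T
    (tt : Fin K → ℝ) (htt : StrictMono tt) (httpos : ∀ k, 0 < tt k ∧ tt k ≤ T)
    -- the observation operator G : H → ℝ^{2JK}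
    (G : H → (Fin J × Fin K × Fin 2 → ℝ))
    (hG : ∀ (u : H) (p : Fin J × Fin K × Fin 2),
      G u p = if p.2.2 = 0 then (Ztr u p.1 (tt p.2.1)).1 else (Ztr u p.1 (tt p.2.1)).2) :
    ∀ ℓ : ℝ, 0 ≤ ℓ → ∃ C : ℝ, 0 < C ∧ ∀ u : H, MemHs φ lam ℓ u →
      eucNorm (G u) ≤ C * (1 + sobNorm φ lam ℓ u) := by
  
  intro ℓ hℓ
  have hlam1 : ∀ k, 1 ≤ lam k := lam_ge_one hlam
  have hlam0 : ∀ k, 0 ≤ lam k := fun k => le_trans zero_le_one (hlam1 k)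
  set ℓ' : ℝ := min ℓ (3/2) with hℓ'def
  have hℓ'0 : 0 ≤ ℓ' := le_min hℓ (by norm_num)
  have hℓ'ℓ : ℓ' ≤ ℓ := min_le_left _ _
  have hℓ's : ℓ' ≤ 3/2 := min_le_right _ _
  obtain ⟨Cemb, hCembpos, hCemb⟩ := hevSup (3/2) (by norm_num)
  obtain ⟨Cs, hCspos, hCs⟩ := hsmooth ℓ' (3/2) hℓ'0 hℓ's (by linarith)
  have hCψ0 : 0 ≤ Cψ := le_trans (Real.sqrt_nonneg _) (hCψ 0 ⟨le_refl _, hT.le⟩)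
  -- the singular exponent
  set e : ℝ := -(3/2 - ℓ') / 2 with hedef
  have he : -1 < e := by
    rw [hedef]; simp only [neg_div]
    have : (3/2 - ℓ') / 2 ≤ 3/4 := by linarith
    linarith
  have he1 : 0 < e + 1 := by linarith
  have he0 : e ≤ 0 := by rw [hedef]; simp only [neg_div]; linarith
  -- bound for the tracer starting points
  set B0 : ℝ := ∑ j : Fin J, ‖z0 j‖ with hB0def
  have hB00 : 0 ≤ B0 := Finset.sum_nonneg fun j _ => norm_nonneg _
  have hz0le : ∀ j : Fin J, ‖z0 j‖ ≤ B0 := fun j =>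
    Finset.single_le_sum (fun i _ => norm_nonneg (z0 i)) (Finset.mem_univ j)
  set A : ℝ := B0 + Cemb*Cs*Cψ*T with hAdef
  set B : ℝ := Cemb*Cs*(T^(e+1)/(e+1)) with hBdef
  have hA0 : 0 ≤ A := by
    have : 0 ≤ Cemb*Cs*Cψ*T := by positivity
    linarith
  have hB0' : 0 ≤ B := by
    have : (0:ℝ) ≤ T^(e+1) := Real.rpow_nonneg hT.le _
    positivity
  set card : ℕ := Fintype.card (Fin J × Fin K × Fin 2) with hcarddef
  refine ⟨Real.sqrt card * (A + B) + 1, by positivity, ?_⟩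
  intro u hu
  obtain ⟨hu', hnorm'⟩ := memHs_mono φ lam hlam1 hℓ'ℓ u hu
  set N : ℝ := sobNorm φ lam ℓ u with hNdef
  have hN0 : 0 ≤ N := Real.sqrt_nonneg _
  -- membership of the solution in H^{3/2} at positive times
  have hMem32 : ∀ σ ∈ Set.Ioc (0:ℝ) T, MemHs φ lam (3/2) (V u σ) := by
    intro σ hσ
    exact memHs_three_half φ lam hlam0 ν T hν hT ψ hψcont u (V u σ) σ hσ.1 hσ.2
      (fun k => (hV u).2 k σ ⟨hσ.1.le, hσ.2⟩)
  -- the dominating function for the tracer velocity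
  set g : ℝ → ℝ := fun σ => Cemb * (Cs * (σ ^ e * N + Cψ)) with hgdef
  -- bound on each tracer position at each observation time
  have htrace : ∀ (j : Fin J) (m : Fin K), ‖Ztr u j (tt m)‖ ≤ A + B * N := by
    intro j m
    set t : ℝ := tt m with htdef
    obtain ⟨ht0, htT⟩ := httpos m
    have heqn := (hZ u j).2 t ⟨ht0.le, htT⟩
    have hgint : IntervalIntegrable g volume 0 t := by
      apply IntervalIntegrable.const_mul
      apply IntervalIntegrable.const_mul
      exact ((intervalIntegral.intervalIntegrable_rpow' he).mul_const _).add
        intervalIntegrable_const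
    have hbound : ‖∫ s in (0:ℝ)..t, ev (Ztr u j s) (V u s)‖ ≤ |∫ s in (0:ℝ)..t, g s| := by
      apply intervalIntegral.norm_integral_le_abs_of_norm_le _ hgint
      filter_upwards [ae_restrict_mem measurableSet_uIoc] with σ hσ
      rw [Set.uIoc_of_le ht0.le] at hσ
      have hσT : σ ∈ Set.Ioc (0:ℝ) T := ⟨hσ.1, hσ.2.trans htT⟩
      have h1 : ‖ev (Ztr u j σ) (V u σ)‖ ≤ Cemb * sobNorm φ lam (3/2) (V u σ) :=
        hCemb (V u σ) (hMem32 σ hσT) _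
      have h2 : sobNorm φ lam (3/2) (V u σ) ≤ Cs * (σ ^ e * sobNorm φ lam ℓ' u + Cψ) :=
        hCs u hu' σ hσT
      have h3 : Cs * (σ ^ e * sobNorm φ lam ℓ' u + Cψ) ≤ Cs * (σ ^ e * N + Cψ) := by
        apply mul_le_mul_of_nonneg_left _ hCspos.le
        have : σ ^ e * sobNorm φ lam ℓ' u ≤ σ ^ e * N :=
          mul_le_mul_of_nonneg_left hnorm' (Real.rpow_nonneg hσ.1.le _)
        linarith
      calc ‖ev (Ztr u j σ) (V u σ)‖ ≤ Cemb * sobNorm φ lam (3/2) (V u σ) := h1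
        _ ≤ Cemb * (Cs * (σ ^ e * sobNorm φ lam ℓ' u + Cψ)) :=
            mul_le_mul_of_nonneg_left h2 hCembpos.le
        _ ≤ Cemb * (Cs * (σ ^ e * N + Cψ)) :=
            mul_le_mul_of_nonneg_left h3 hCembpos.le
        _ = g σ := rfl
    -- compute the integral of g
    have hrint : IntervalIntegrable (fun σ : ℝ => σ ^ e) volume 0 t :=
      intervalIntegral.intervalIntegrable_rpow' he
    have hgval : (∫ s in (0:ℝ)..t, g s) =
        Cemb * (Cs * ((t^(e+1)/(e+1)) * N + Cψ * t)) := by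
      rw [hgdef]
      simp only []
      rw [intervalIntegral.integral_const_mul, intervalIntegral.integral_const_mul,
        intervalIntegral.integral_add (hrint.mul_const _) intervalIntegrable_const,
        intervalIntegral.integral_mul_const, intervalIntegral.integral_const,
        integral_rpow (Or.inl he)]
      rw [Real.zero_rpow (by linarith : e + 1 ≠ 0)]
      simp only [smul_eq_mul]
      ring_nf
    have hgnn : 0 ≤ ∫ s in (0:ℝ)..t, g s := by
      rw [hgval]
      have h4 : (0:ℝ) ≤ t^(e+1) := Real.rpow_nonneg ht0.le _
      have h5 : (0:ℝ) ≤ t^(e+1)/(e+1) := by positivity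
      have h6 : (0:ℝ) ≤ Cψ * t := by positivity
      positivity
    have hgle : (∫ s in (0:ℝ)..t, g s) ≤ Cemb*Cs*Cψ*T + B * N := by
      rw [hgval, hBdef]
      have h7 : t^(e+1) ≤ T^(e+1) := Real.rpow_le_rpow ht0.le htT (by linarith)
      have h8 : t^(e+1)/(e+1) ≤ T^(e+1)/(e+1) := by gcongr
      have e1 : Cemb*Cs*Cψ*t ≤ Cemb*Cs*Cψ*T :=
        mul_le_mul_of_nonneg_left htT (by positivity)
      have e2 : Cemb*Cs*(t^(e+1)/(e+1))*N ≤ Cemb*Cs*(T^(e+1)/(e+1))*N := by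
        apply mul_le_mul_of_nonneg_right _ hN0
        exact mul_le_mul_of_nonneg_left h8 (by positivity)
      calc Cemb * (Cs * (t^(e+1)/(e+1) * N + Cψ * t))
          = Cemb*Cs*Cψ*t + Cemb*Cs*(t^(e+1)/(e+1))*N := by ring
        _ ≤ Cemb*Cs*Cψ*T + Cemb*Cs*(T^(e+1)/(e+1))*N := by linarith
    rw [heqn]
    calc ‖z0 j + ∫ s in (0:ℝ)..t, ev (Ztr u j s) (V u s)‖
        ≤ ‖z0 j‖ + ‖∫ s in (0:ℝ)..t, ev (Ztr u j s) (V u s)‖ := norm_add_le _ _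
      _ ≤ B0 + |∫ s in (0:ℝ)..t, g s| := add_le_add (hz0le j) hbound
      _ = B0 + ∫ s in (0:ℝ)..t, g s := by rw [abs_of_nonneg hgnn]
      _ ≤ B0 + (Cemb*Cs*Cψ*T + B*N) := by linarith
      _ = A + B*N := by rw [hAdef]; ring
  -- assemble the Euclidean-norm bound
  have hcomp : ∀ p : Fin J × Fin K × Fin 2, |G u p| ≤ A + B*N := by
    intro p
    rw [hG u p]
    split_ifs
    · have h1 : |(Ztr u p.1 (tt p.2.1)).1| ≤ ‖Ztr u p.1 (tt p.2.1)‖ := by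
        simpa [Real.norm_eq_abs] using norm_fst_le (Ztr u p.1 (tt p.2.1))
      exact le_trans h1 (htrace p.1 p.2.1)
    · have h1 : |(Ztr u p.1 (tt p.2.1)).2| ≤ ‖Ztr u p.1 (tt p.2.1)‖ := by
        simpa [Real.norm_eq_abs] using norm_snd_le (Ztr u p.1 (tt p.2.1))
      exact le_trans h1 (htrace p.1 p.2.1)
  have hsum : (∑ p : Fin J × Fin K × Fin 2, (G u p)^2) ≤ (card:ℝ) * (A + B*N)^2 := by
    calc (∑ p : Fin J × Fin K × Fin 2, (G u p)^2)
        ≤ ∑ _p : Fin J × Fin K × Fin 2, (A+B*N)^2 := by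
          apply Finset.sum_le_sum
          intro p _
          rw [← sq_abs (G u p)]
          exact pow_le_pow_left₀ (abs_nonneg _) (hcomp p) 2
      _ = (card:ℝ) * (A+B*N)^2 := by
          rw [Finset.sum_const, Finset.card_univ, nsmul_eq_mul, hcarddef]
  have hABN : 0 ≤ A + B*N := by positivity
  have heuc : eucNorm (G u) ≤ Real.sqrt card * (A + B*N) := by
    show Real.sqrt (∑ p, (G u p)^2) ≤ _
    refine le_trans (Real.sqrt_le_sqrt hsum) ?_
    rw [Real.sqrt_mul (Nat.cast_nonneg card), Real.sqrt_sq hABN]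
  refine heuc.trans ?_
  have hkey : A + B*N ≤ (A+B)*(1+N) := by nlinarith
  have hs0 : (0:ℝ) ≤ Real.sqrt card := Real.sqrt_nonneg _
  nlinarith [mul_le_mul_of_nonneg_left hkey hs0]
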